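/- For all positive integers m and n, let ω : Fin m → ℝ³ with ω(x) ∈ convexHull{ω₀, ω₁, ω₂, ω₃} for every x, and let f : Fin n → ℝ³ satisfy f(y)·σ ≥ 0 for every σ ∈ convexHull{ω₀, ω₁, ω₂, ω₃} and every y, together with \sum_y f(y) = (0,0,1). Then the m×n matrix p defined by p_{x,y} = f(y)·ω(x) belongs to C(m,n,2). In other words, every input/output correlation obtainable from a single squit is obtainable from one classical bit with shared randomness. -/

import Mathlib

open Matrix

/-- `V m n d` : the set of `m × n` real matrices with all entries in `{0,1}`,
each row summing to `1`, and with at most `d` nonzero columns. -/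
def V (m n d : ℕ) : Set (Matrix (Fin m) (Fin n) ℝ) :=
  {p | (∀ x y, p x y = 0 ∨ p x y = 1) ∧ (∀ x, ∑ y, p x y = 1) ∧
       ({y : Fin n | ∃ x, p x y ≠ 0}).ncard ≤ d}

/-- `C m n d` : the convex hull of `V m n d`. -/
def C (m n d : ℕ) : Set (Matrix (Fin m) (Fin n) ℝ) := convexHull ℝ (V m n d)

/-- The four extremal states of the squit. -/
noncomputable def ws : Fin 4 → (Fin 3 → ℝ) :=
  ![![1, 0, 1], ![0, 1, 1], ![-1, 0, 1], ![0, -1, 1]]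

/-- sign of a boolean -/
def sg (b : Bool) : ℝ := if b then 1 else -1

lemma sg_true : sg true = 1 := rfl
lemma sg_false : sg false = -1 := rfl

lemma sg_not (b : Bool) : sg (!b) = - sg b := by cases b <;> simp [sg]

/-- ray weights -/
noncomputable def tt (a b c : ℝ) (s : Bool × Bool) : ℝ :=
  (c + sg s.1 * a) * (c + sg s.2 * b) / (4 * c)

lemma tt_nonneg {a b c : ℝ} (ha : |a| ≤ c) (hb : |b| ≤ c) (s : Bool × Bool) :
    0 ≤ tt a b c s := by
  rcases abs_le.mp ha with ⟨ha1, ha2⟩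
  rcases abs_le.mp hb with ⟨hb1, hb2⟩
  have h1 : 0 ≤ c + sg s.1 * a := by cases s.1 <;> simp [sg] <;> linarith
  have h2 : 0 ≤ c + sg s.2 * b := by cases s.2 <;> simp [sg] <;> linarith
  have h3 : (0:ℝ) ≤ 4 * c := by have := (abs_nonneg a).trans ha; linarith
  exact div_nonneg (mul_nonneg h1 h2) h3

lemma tt_sum (a b c : ℝ) : ∑ s : Bool × Bool, tt a b c s = c := by
  rcases eq_or_ne c 0 with rfl | hc
  · simp [tt]
  · simp only [Fintype.sum_prod_type, Fintype.sum_bool, tt, sg]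
    simp only [if_true, if_false, Bool.cond_true, Bool.false_eq_true]
    field_simp
    ring

lemma tt_recon {a b c : ℝ} (ha : |a| ≤ c) (hb : |b| ≤ c) (u v : ℝ) :
    ∑ s : Bool × Bool, tt a b c s * (sg s.1 * u + sg s.2 * v + 1) = a * u + b * v + c := by
  rcases eq_or_ne c 0 with rfl | hc
  · have ha' : a = 0 := by have := abs_nonneg a; have := abs_le.mp ha; nlinarith [abs_le.mp ha]
    have hb' : b = 0 := by nlinarith [abs_le.mp hb, abs_nonneg b]
    simp [tt, ha', hb']
  · simp only [Fintype.sum_prod_type, Fintype.sum_bool, tt, sg]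
    simp only [if_true, if_false, Bool.false_eq_true]
    field_simp
    ring

lemma tt_antipode {a b c : ℝ} (ha : |a| ≤ c) (hb : |b| ≤ c) (s : Bool × Bool) :
    tt a b c (!s.1, !s.2) = tt a b c s - (sg s.1 * a + sg s.2 * b) / 2 := by
  rcases eq_or_ne c 0 with rfl | hc
  · have ha' : a = 0 := by nlinarith [abs_le.mp ha, abs_nonneg a]
    have hb' : b = 0 := by nlinarith [abs_le.mp hb, abs_nonneg b]
    simp [tt, ha', hb']
  · simp only [tt, sg_not]
    field_simp
    ring

section pair

variable {m n : ℕ}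

/-- deterministic two-column matrices are in V m n 2 -/
lemma pair_mem_V (y y' : Fin n) (q : Fin m → ℝ) (hq : ∀ x, q x = 0 ∨ q x = 1) :
    (Matrix.of fun x z => q x * (if z = y then (1:ℝ) else 0)
        + (1 - q x) * (if z = y' then 1 else 0)) ∈ V m n 2 := by
  refine ⟨?_, ?_, ?_⟩
  · intro x z
    rcases hq x with h | h <;>
      rcases eq_or_ne z y with rfl | hz <;>
      rcases eq_or_ne z y' with h' | hz' <;>
      simp_all
  · intro x
    simp only [Matrix.of_apply]
    rw [Finset.sum_add_distrib]
    simp [← Finset.mul_sum, Finset.sum_ite_eq]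
  · have hsub : {z : Fin n | ∃ x, (Matrix.of fun x z => q x * (if z = y then (1:ℝ) else 0)
        + (1 - q x) * (if z = y' then 1 else 0)) x z ≠ 0} ⊆ {y, y'} := by
      intro z ⟨x, hx⟩
      by_contra hz
      simp only [Set.mem_insert_iff, Set.mem_singleton_iff, not_or] at hz
      simp [Matrix.of_apply, hz.1, hz.2] at hx
    calc ({z : Fin n | ∃ x, _ ≠ 0}).ncard ≤ ({y, y'} : Set (Fin n)).ncard :=
          Set.ncard_le_ncard hsub (Set.toFinite _)
      _ ≤ 2 := by
          have := Set.ncard_insert_le y ({y'} : Set (Fin n))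
          simpa using this

/-- stochastic two-column matrices are in C m n 2 -/
lemma pair_mem_C (y y' : Fin n) (q : Fin m → ℝ) (h0 : ∀ x, 0 ≤ q x) (h1 : ∀ x, q x ≤ 1) :
    (Matrix.of fun x z => q x * (if z = y then (1:ℝ) else 0)
        + (1 - q x) * (if z = y' then 1 else 0)) ∈ C m n 2 := by
  suffices H : ∀ (T : Finset (Fin m)) (q : Fin m → ℝ), (∀ x, 0 ≤ q x) → (∀ x, q x ≤ 1) →
      (∀ x ∉ T, q x = 0 ∨ q x = 1) →
      (Matrix.of fun x z => q x * (if z = y then (1:ℝ) else 0)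
        + (1 - q x) * (if z = y' then 1 else 0)) ∈ C m n 2 by
    exact H Finset.univ q h0 h1 (fun x hx => absurd (Finset.mem_univ x) hx)
  intro T
  induction T using Finset.induction_on with
  | empty =>
    intro q h0 h1 hd
    exact subset_convexHull ℝ _ (pair_mem_V y y' q (fun x => hd x (Finset.notMem_empty x)))
  | insert a T ha ih =>
    intro q h0 h1 hd
    have m1 := ih (Function.update q a 1)
      (fun x => by
        rcases eq_or_ne x a with rfl | h
        · simp
        · simp [Function.update_of_ne h]; exact h0 x)
      (fun x => by
        rcases eq_or_ne x a with rfl | h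
        · simp
        · simp [Function.update_of_ne h]; exact h1 x)
      (fun x hx => by
        rcases eq_or_ne x a with rfl | h
        · simp [Function.update]
        · rw [Function.update_of_ne h]
          exact hd x (fun hT => hx (Finset.mem_of_mem_insert_of_ne hT h)))
    have m0 := ih (Function.update q a 0)
      (fun x => by
        rcases eq_or_ne x a with rfl | h
        · simp
        · simp [Function.update_of_ne h]; exact h0 x)
      (fun x => by
        rcases eq_or_ne x a with rfl | h
        · simp
        · simp [Function.update_of_ne h]; exact h1 x)
      (fun x hx => by
        rcases eq_or_ne x a with rfl | h
        · simp [Function.update]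
        · rw [Function.update_of_ne h]
          exact hd x (fun hT => hx (Finset.mem_of_mem_insert_of_ne hT h)))
    have key : (Matrix.of fun x z => q x * (if z = y then (1:ℝ) else 0)
        + (1 - q x) * (if z = y' then 1 else 0))
        = q a • (Matrix.of fun x z => (Function.update q a 1) x * (if z = y then (1:ℝ) else 0)
            + (1 - (Function.update q a 1) x) * (if z = y' then 1 else 0))
        + (1 - q a) • (Matrix.of fun x z => (Function.update q a 0) x * (if z = y then (1:ℝ) else 0)
            + (1 - (Function.update q a 0) x) * (if z = y' then 1 else 0)) := by
      ext x z
      rcases eq_or_ne x a with rfl | h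
      · simp [Matrix.add_apply, Matrix.smul_apply, smul_eq_mul]
        try ring
      · simp [Matrix.add_apply, Matrix.smul_apply, smul_eq_mul, Function.update_of_ne h]
        ring
    rw [key]
    exact (convex_convexHull ℝ _) m1 m0 (h0 a) (by linarith [h1 a]) (by ring)

end pair

section main

variable {m n : ℕ}

lemma hull_affine_nonneg (α β γ δ : ℝ)
    (h : ∀ k : Fin 4, 0 ≤ α * ws k 0 + β * ws k 1 + γ * ws k 2 + δ) :
    ∀ σ ∈ convexHull ℝ ({ws 0, ws 1, ws 2, ws 3} : Set (Fin 3 → ℝ)),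
      0 ≤ α * σ 0 + β * σ 1 + γ * σ 2 + δ := by
  intro σ hσ
  have hsub : ({ws 0, ws 1, ws 2, ws 3} : Set (Fin 3 → ℝ)) ⊆
      {σ : Fin 3 → ℝ | 0 ≤ α * σ 0 + β * σ 1 + γ * σ 2 + δ} := by
    intro τ hτ
    simp only [Set.mem_insert_iff, Set.mem_singleton_iff] at hτ
    rcases hτ with rfl | rfl | rfl | rfl
    exacts [h 0, h 1, h 2, h 3]
  have hcvx : Convex ℝ {σ : Fin 3 → ℝ | 0 ≤ α * σ 0 + β * σ 1 + γ * σ 2 + δ} := by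
    intro p hp q hq a b ha hb hab
    simp only [Set.mem_setOf_eq] at *
    have hb' : b = 1 - a := by linarith
    subst hb'
    have key : α * (a • p + (1 - a) • q) 0 + β * (a • p + (1 - a) • q) 1
        + γ * (a • p + (1 - a) • q) 2 + δ
        = a * (α * p 0 + β * p 1 + γ * p 2 + δ)
          + (1 - a) * (α * q 0 + β * q 1 + γ * q 2 + δ) := by
      simp only [Pi.add_apply, Pi.smul_apply, smul_eq_mul]
      ring
    rw [key]
    have := mul_nonneg ha hp
    have := mul_nonneg hb hq
    linarith
  exact convexHull_min hsub hcvx hσ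

/-- ray weights for each effect -/
noncomputable def tY (f : Fin n → Fin 3 → ℝ) (y : Fin n) (s : Bool × Bool) : ℝ :=
  tt (f y 0) (f y 1) (f y 2) s

/-- total mass on a ray -/
noncomputable def Ms (f : Fin n → Fin 3 → ℝ) (s : Bool × Bool) : ℝ := ∑ y, tY f y s

variable (f : Fin n → Fin 3 → ℝ)

lemma tY_nonneg (habs : ∀ y, |f y 0| ≤ f y 2 ∧ |f y 1| ≤ f y 2) (y : Fin n) (s : Bool × Bool) :
    0 ≤ tY f y s := tt_nonneg (habs y).1 (habs y).2 s

lemma Ms_nonneg (habs : ∀ y, |f y 0| ≤ f y 2 ∧ |f y 1| ≤ f y 2) (s : Bool × Bool) :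
    0 ≤ Ms f s := Finset.sum_nonneg fun y _ => tY_nonneg f habs y s

lemma tY_eq_zero (habs : ∀ y, |f y 0| ≤ f y 2 ∧ |f y 1| ≤ f y 2) (s : Bool × Bool)
    (hs : Ms f s = 0) (y : Fin n) : tY f y s = 0 :=
  (Finset.sum_eq_zero_iff_of_nonneg (fun y _ => tY_nonneg f habs y s)).mp hs y (Finset.mem_univ y)

lemma Ms_antipode (habs : ∀ y, |f y 0| ≤ f y 2 ∧ |f y 1| ≤ f y 2)
    (ha0 : ∑ y, f y 0 = 0) (hb0 : ∑ y, f y 1 = 0) (s : Bool × Bool) :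
    Ms f (!s.1, !s.2) = Ms f s := by
  unfold Ms
  calc ∑ y, tY f y (!s.1, !s.2)
      = ∑ y, (tY f y s - (sg s.1 * f y 0 + sg s.2 * f y 1) / 2) :=
        Finset.sum_congr rfl fun y _ => tt_antipode (habs y).1 (habs y).2 s
    _ = ∑ y, tY f y s := by
        rw [Finset.sum_sub_distrib]
        have : ∑ y, (sg s.1 * f y 0 + sg s.2 * f y 1) / 2
            = (sg s.1 * ∑ y, f y 0 + sg s.2 * ∑ y, f y 1) / 2 := by
          rw [Finset.mul_sum, Finset.mul_sum, ← Finset.sum_add_distrib, Finset.sum_div]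
        rw [this, ha0, hb0]
        ring_nf

lemma Ms_total (hc1 : ∑ y, f y 2 = 1) :
    Ms f (true, true) + Ms f (true, false) + Ms f (false, true) + Ms f (false, false) = 1 := by
  have h1 : ∑ s : Bool × Bool, Ms f s = 1 := by
    unfold Ms
    rw [Finset.sum_comm]
    calc ∑ y, ∑ s : Bool × Bool, tY f y s = ∑ y, f y 2 :=
          Finset.sum_congr rfl fun y _ => tt_sum _ _ _
      _ = 1 := hc1
  simp only [Fintype.sum_prod_type, Fintype.sum_bool] at h1
  linarith

lemma sum_pair_mul (g : Fin n → ℝ) (X : ℝ) : ∑ y, 2 * g y * X = 2 * (∑ y, g y) * X := by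
  rw [Finset.mul_sum, Finset.sum_mul]

end main

section decomp

variable {m n : ℕ}

lemma main_decomp (ω : Fin m → Fin 3 → ℝ) (f : Fin n → Fin 3 → ℝ)
    (habs : ∀ y, |f y 0| ≤ f y 2 ∧ |f y 1| ≤ f y 2)
    (ha0 : ∑ y, f y 0 = 0) (hb0 : ∑ y, f y 1 = 0) (hc1 : ∑ y, f y 2 = 1)
    (hω2 : ∀ x, ω x 2 = 1)
    (hqpos : ∀ (s : Bool × Bool) (x : Fin m), 0 ≤ sg s.1 * ω x 0 + sg s.2 * ω x 1 + 1) :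
    (Matrix.of fun x y => f y ⬝ᵥ ω x) ∈ C m n 2 := by
  classical
  -- the binary-measurement response functions
  set q : Bool × Bool → Fin m → ℝ :=
    fun s x => (sg s.1 * ω x 0 + sg s.2 * ω x 1 + 1) / 2 with hqdef
  -- weights of the decomposition
  set w : Bool × Fin n × Fin n → ℝ :=
    fun i => 2 * tY f i.2.1 (true, i.1) * tY f i.2.2 (false, !i.1) / Ms f (true, i.1) with hwdef
  have hanti : ∀ k : Bool, Ms f (false, !k) = Ms f (true, k) := by
    intro k
    have := Ms_antipode f habs ha0 hb0 (true, k)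
    simpa using this
  have hwnn : ∀ i, 0 ≤ w i := by
    intro i
    exact div_nonneg (mul_nonneg (mul_nonneg (by norm_num) (tY_nonneg f habs _ _))
      (tY_nonneg f habs _ _)) (Ms_nonneg f habs _)
  -- row sums of weights
  have hrow1 : ∀ (k : Bool) (z : Fin n), ∑ y', w (k, z, y') = 2 * tY f z (true, k) := by
    intro k z
    have : ∑ y', w (k, z, y')
        = 2 * tY f z (true, k) * Ms f (false, !k) / Ms f (true, k) := by
      simp only [hwdef]
      rw [← Finset.sum_div, ← Finset.mul_sum]
      rfl
    rw [this, hanti k]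
    rcases eq_or_ne (Ms f (true, k)) 0 with h | h
    · rw [h, tY_eq_zero f habs _ h z]; simp
    · field_simp
  have hrow2 : ∀ (k : Bool) (z : Fin n), ∑ y, w (k, y, z) = 2 * tY f z (false, !k) := by
    intro k z
    have : ∑ y, w (k, y, z)
        = 2 * Ms f (true, k) * tY f z (false, !k) / Ms f (true, k) := by
      simp only [hwdef]
      rw [← Finset.sum_div, sum_pair_mul]
      rfl
    rw [this]
    rcases eq_or_ne (Ms f (true, k)) 0 with h | h
    · have h' : Ms f (false, !k) = 0 := by rw [hanti k, h]
      rw [h, tY_eq_zero f habs _ h' z]; simp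
    · field_simp <;> try ring
  -- total weight is 1
  have hwsum : ∑ i : Bool × Fin n × Fin n, w i = 1 := by
    rw [Fintype.sum_prod_type]
    have hks : ∀ k : Bool, (∑ p : Fin n × Fin n, w (k, p)) = 2 * Ms f (true, k) := by
      intro k
      rw [Fintype.sum_prod_type]
      have : ∀ y, ∑ y', w (k, y, y')
          = 2 * tY f y (true, k) * Ms f (true, k) / Ms f (true, k) := by
        intro y
        have : ∑ y', w (k, y, y')
            = 2 * tY f y (true, k) * Ms f (false, !k) / Ms f (true, k) := by
          simp only [hwdef]
          rw [← Finset.sum_div, ← Finset.mul_sum]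
          rfl
        rw [this, hanti k]
      calc ∑ y, ∑ y', w (k, y, y')
          = ∑ y, 2 * tY f y (true, k) * Ms f (true, k) / Ms f (true, k) :=
            Finset.sum_congr rfl fun y _ => this y
        _ = 2 * Ms f (true, k) * Ms f (true, k) / Ms f (true, k) := by
            rw [← Finset.sum_div, sum_pair_mul]
            rfl
        _ = 2 * Ms f (true, k) := by
            rcases eq_or_ne (Ms f (true, k)) 0 with h | h
            · rw [h]; simp
            · field_simp <;> try ring
    rw [Fintype.sum_bool, hks true, hks false]
    have htot := Ms_total f hc1
    have h1 := hanti true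
    have h2 := hanti false
    simp only [Bool.not_true, Bool.not_false] at h1 h2
    linarith
  -- bounds on q
  have hq0 : ∀ s x, 0 ≤ q s x := by
    intro s x
    have := hqpos s x
    simp only [hqdef]
    linarith
  have hq1 : ∀ s x, q s x ≤ 1 := by
    intro s x
    have h2 := hqpos (!s.1, !s.2) x
    rw [sg_not, sg_not] at h2
    simp only [hqdef]
    linarith
  have hqc : ∀ (k : Bool) (x : Fin m), 1 - q (true, k) x = q (false, !k) x := by
    intro k x
    simp only [hqdef, sg_not]
    simp [sg]
    try ring
  -- the matrix decomposition
  have key : (Matrix.of fun x y => f y ⬝ᵥ ω x)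
      = ∑ i : Bool × Fin n × Fin n, w i •
          (Matrix.of fun x z => q (true, i.1) x * (if z = i.2.1 then (1:ℝ) else 0)
            + (1 - q (true, i.1) x) * (if z = i.2.2 then 1 else 0)) := by
    ext x z
    rw [Matrix.sum_apply]
    simp only [Matrix.smul_apply, Matrix.of_apply, smul_eq_mul]
    have lhs_eq : f z ⬝ᵥ ω x = f z 0 * ω x 0 + f z 1 * ω x 1 + f z 2 := by
      simp [dotProduct, Fin.sum_univ_three, hω2 x]
    rw [lhs_eq]
    have expand : ∑ i : Bool × Fin n × Fin n,
        w i * (q (true, i.1) x * (if z = i.2.1 then (1:ℝ) else 0)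
          + (1 - q (true, i.1) x) * (if z = i.2.2 then 1 else 0))
        = ∑ k : Bool, (q (true, k) x * (2 * tY f z (true, k))
            + (1 - q (true, k) x) * (2 * tY f z (false, !k))) := by
      rw [Fintype.sum_prod_type]
      refine Finset.sum_congr rfl fun k _ => ?_
      rw [Fintype.sum_prod_type]
      calc ∑ y, ∑ y', w (k, y, y') * (q (true, k) x * (if z = y then (1:ℝ) else 0)
              + (1 - q (true, k) x) * (if z = y' then 1 else 0))
          = ∑ y, ∑ y', (q (true, k) x * (if z = y then (1:ℝ) else 0) * w (k, y, y')
              + (if z = y' then (1:ℝ) else 0) * ((1 - q (true, k) x) * w (k, y, y'))) :=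
            Finset.sum_congr rfl fun y _ => Finset.sum_congr rfl fun y' _ => by ring
        _ = ∑ y, (q (true, k) x * (if z = y then (1:ℝ) else 0) * (∑ y', w (k, y, y'))
              + (1 - q (true, k) x) * w (k, y, z)) := by
            refine Finset.sum_congr rfl fun y _ => ?_
            rw [Finset.sum_add_distrib, ← Finset.mul_sum]
            congr 1
            simp [ite_mul, Finset.sum_ite_eq]
        _ = ∑ y, ((if z = y then (1:ℝ) else 0) * (q (true, k) x * (2 * tY f y (true, k)))
              + (1 - q (true, k) x) * w (k, y, z)) := by
            refine Finset.sum_congr rfl fun y _ => ?_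
            rw [hrow1 k y]
            ring
        _ = q (true, k) x * (2 * tY f z (true, k))
              + (1 - q (true, k) x) * (∑ y, w (k, y, z)) := by
            rw [Finset.sum_add_distrib, ← Finset.mul_sum]
            congr 1
            simp [ite_mul, Finset.sum_ite_eq]
        _ = q (true, k) x * (2 * tY f z (true, k))
              + (1 - q (true, k) x) * (2 * tY f z (false, !k)) := by
            rw [hrow2 k z]
    rw [expand]
    have recon := tt_recon (habs z).1 (habs z).2 (ω x 0) (ω x 1)
    simp only [Fintype.sum_prod_type, Fintype.sum_bool] at recon
    simp only [sg_true, sg_false] at recon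
    simp only [Fintype.sum_bool, hqdef, sg_true, sg_false, Bool.not_true, Bool.not_false] at recon ⊢
    unfold tY
    linear_combination -recon
  rw [key]
  refine Convex.sum_mem (convex_convexHull ℝ _) (fun i _ => hwnn i) hwsum ?_
  intro i _
  have := pair_mem_C (m := m) i.2.1 i.2.2 (q (true, i.1)) (hq0 _) (hq1 _)
  exact this

end decomp

/-- Every input/output correlation obtainable from a single squit is obtainable
from one classical bit with shared randomness: the squit has signaling dimension 2. -/
theorem squit_signaling_dimension_two (m n : ℕ) (hm : 0 < m) (hn : 0 < n)
    (ω : Fin m → (Fin 3 → ℝ))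
    (hω : ∀ x, ω x ∈ convexHull ℝ ({ws 0, ws 1, ws 2, ws 3} : Set (Fin 3 → ℝ)))
    (f : Fin n → (Fin 3 → ℝ))
    (hf : ∀ y, ∀ σ ∈ convexHull ℝ ({ws 0, ws 1, ws 2, ws 3} : Set (Fin 3 → ℝ)),
      0 ≤ f y ⬝ᵥ σ)
    (hsum : ∑ y, f y = ![0, 0, 1]) :
    (Matrix.of fun x y => f y ⬝ᵥ ω x) ∈ C m n 2 := by
  have hvert : ∀ k : Fin 4, ws k ∈ convexHull ℝ ({ws 0, ws 1, ws 2, ws 3} : Set (Fin 3 → ℝ)) := by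
    intro k
    apply subset_convexHull
    fin_cases k <;> simp [Set.mem_insert_iff]
  have hdot : ∀ (y : Fin n) (k : Fin 4),
      f y ⬝ᵥ ws k = f y 0 * ws k 0 + f y 1 * ws k 1 + f y 2 * ws k 2 := by
    intro y k
    simp [dotProduct, Fin.sum_univ_three]
  have habs : ∀ y, |f y 0| ≤ f y 2 ∧ |f y 1| ≤ f y 2 := by
    intro y
    have h0 := hf y (ws 0) (hvert 0)
    have h1 := hf y (ws 1) (hvert 1)
    have h2 := hf y (ws 2) (hvert 2)
    have h3 := hf y (ws 3) (hvert 3)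
    rw [hdot y 0] at h0
    rw [hdot y 1] at h1
    rw [hdot y 2] at h2
    rw [hdot y 3] at h3
    simp [ws] at h0 h1 h2 h3
    constructor <;> rw [abs_le] <;> constructor <;> linarith
  have hsc : ∀ i : Fin 3, ∑ y, f y i = ![(0:ℝ), 0, 1] i := by
    intro i
    rw [← hsum]
    simp
  have ha0 : ∑ y, f y 0 = 0 := by simpa using hsc 0
  have hb0 : ∑ y, f y 1 = 0 := by simpa using hsc 1
  have hc1 : ∑ y, f y 2 = 1 := by simpa using hsc 2
  have hω2 : ∀ x, ω x 2 = 1 := by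
    intro x
    have hup := hull_affine_nonneg 0 0 1 (-1)
      (by intro k; fin_cases k <;> simp [ws]) (ω x) (hω x)
    have hdn := hull_affine_nonneg 0 0 (-1) 1
      (by intro k; fin_cases k <;> simp [ws]) (ω x) (hω x)
    linarith
  have hqpos : ∀ (s : Bool × Bool) (x : Fin m), 0 ≤ sg s.1 * ω x 0 + sg s.2 * ω x 1 + 1 := by
    intro s x
    have h := hull_affine_nonneg (sg s.1) (sg s.2) 0 1
      (by rcases s with ⟨a, b⟩; intro k; cases a <;> cases b <;> fin_cases k <;>
        norm_num [ws, sg]) (ω x) (hω x)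
    linarith
  exact main_decomp ω f habs ha0 hb0 hc1 hω2 hqpos
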